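/- Let B_1 = {0, 11} and define inductively B_{n+1} = {b_1 b_2 ⋯ b_{t(n)} τ(n) : b_i ∈ B_n}, where τ(n) is the concatenation of all elements of B_n (in a fixed enumeration), let X_n be the coded shift generated by B_n, and let X = ⋂_{n≥1} X_n. Let s(n) and ℓ(n) denote the shortest and longest lengths of words in B_n. Suppose the sequence (t(n))_{n≥1} of integers t(n) ≥ 2 satisfies, for all n ≥ 1: s(n)/ℓ(n) < 2/3, t(n) ≥ ℓ(n)/(ℓ(n) − s(n)), and t(n) ≥ (2s(n) + 2ℓ(n) + 3|τ(n)|)/ℓ(n). Then X is topologically mixing. -/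

import Mathlib

open MeasureTheory Filter Topology

namespace DbarPaper

variable {A : Type} [Fintype A] [DecidableEq A] [Inhabited A]
  [TopologicalSpace A] [DiscreteTopology A]
  [MeasurableSpace A] [MeasurableSingletonClass A]

/-- The shift map on the full shift `𝒜^∞ = ℕ → A`. -/
def shift : (ℕ → A) → (ℕ → A) := fun x n => x (n + 1)

/-- A shift space: a nonempty, closed, shift-invariant subset of the full shift. -/
def ShiftSpace (X : Set (ℕ → A)) : Prop :=
  X.Nonempty ∧ IsClosed X ∧ ∀ x ∈ X, shift x ∈ X

/-- The word `w` appears in the sequence `x`. -/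
def occursIn (w : List A) (x : ℕ → A) : Prop :=
  ∃ i : ℕ, w = List.ofFn (fun k : Fin w.length => x (i + (k : ℕ)))

/-- The language of a set `X`: all finite words appearing in points of `X`. -/
def lang (X : Set (ℕ → A)) : Set (List A) := {w | ∃ x ∈ X, occursIn w x}

/-- Words of length `n` in the language of `X`. -/
def langN (n : ℕ) (X : Set (ℕ → A)) : Set (List A) := {w | w ∈ lang X ∧ w.length = n}

/-- The pseudometric `d̄` on the full shift. -/
noncomputable def dbar (x y : ℕ → A) : ℝ :=
  Filter.limsup
    (fun n => (((Finset.range n).filter (fun j => x j ≠ y j)).card : ℝ) / (n : ℝ))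
    Filter.atTop

/-- Hausdorff "distance" between two sets induced by a `ℝ`-valued distance. -/
noncomputable def hausdist {Z : Type*} (d : Z → Z → ℝ) (P Q : Set Z) : ℝ :=
  max (⨆ p : P, ⨅ q : Q, d p q) (⨆ q : Q, ⨅ p : P, d p q)

/-- A probability measure is shift-invariant. -/
def invariantPM (μ : ProbabilityMeasure (ℕ → A)) : Prop :=
  (μ : Measure (ℕ → A)).map shift = (μ : Measure (ℕ → A))

/-- `M_σ(X)`: shift-invariant Borel probability measures giving `X` full measure. -/
def Msigma (X : Set (ℕ → A)) : Set (ProbabilityMeasure (ℕ → A)) :=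
  {μ | invariantPM μ ∧ μ X = 1}

/-- `ξ` is a joining of `μ` and `ν`: a `σ×σ`-invariant measure on the product with
marginals `μ` and `ν`. -/
def IsJoining (ξ : Measure ((ℕ → A) × (ℕ → A))) (μ ν : ProbabilityMeasure (ℕ → A)) : Prop :=
  ξ.map (Prod.map shift shift) = ξ ∧
  ξ.map Prod.fst = (μ : Measure (ℕ → A)) ∧ ξ.map Prod.snd = (ν : Measure (ℕ → A))

/-- Ornstein's metric `d̄_M` on invariant measures. -/
noncomputable def dbarM (μ ν : ProbabilityMeasure (ℕ → A)) : ℝ :=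
  sInf {r : ℝ | ∃ ξ : Measure ((ℕ → A) × (ℕ → A)),
    IsJoining ξ μ ν ∧ r = (ξ {p | p.1 0 ≠ p.2 0}).toReal}

/-- `d̄_M`-stability of a shift space (Austin). -/
def DbarMStable (X : Set (ℕ → A)) : Prop :=
  ∀ ε : ℝ, 0 < ε → ∃ U : Set (ProbabilityMeasure (ℕ → A)), IsOpen U ∧ Msigma X ⊆ U ∧
    ∀ ν ∈ U, invariantPM ν → ∃ μ ∈ Msigma X, dbarM μ ν < ε

/-- The infinite concatenation of a sequence of (nonempty) words. -/
def concatSeq (w : ℕ → List A) : ℕ → A := fun n =>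
  ((List.ofFn (fun i : Fin (n + 1) => w (i : ℕ))).flatten).getD n default

/-- The `d̄`-shadowing property. -/
def DbarShadowing (X : Set (ℕ → A)) : Prop :=
  ∀ ε : ℝ, 0 < ε → ∃ N : ℕ, 0 < N ∧ ∀ w : ℕ → List A,
    (∀ j, w j ∈ lang X) → (∀ j, N ≤ (w j).length) →
    ∃ x' ∈ X, dbar (concatSeq w) x' < ε

/-- `U_n(X)`: the union of cylinders of words of length `n` in the language of `X`. -/
def cylNbhd (X : Set (ℕ → A)) (n : ℕ) : Set (ℕ → A) :=
  {x | List.ofFn (fun k : Fin n => x (k : ℕ)) ∈ lang X}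

/-- The `n`-th (topological) Markov approximation of `X`: all sequences whose subwords of
length `n+1` belong to the language of `X`. -/
def markovApprox (X : Set (ℕ → A)) (n : ℕ) : Set (ℕ → A) :=
  {x | ∀ i : ℕ, List.ofFn (fun k : Fin (n + 1) => x (i + (k : ℕ))) ∈ lang X}

/-- Transitivity, in terms of the language. -/
def TransitiveShift (X : Set (ℕ → A)) : Prop :=
  ∀ u ∈ lang X, ∀ w ∈ lang X, ∃ v : List A, u ++ v ++ w ∈ lang X

/-- Topological mixing, in terms of the language. -/
def MixingShift (X : Set (ℕ → A)) : Prop :=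
  ∀ u ∈ lang X, ∀ w ∈ lang X, ∃ N : ℕ, ∀ m : ℕ, N ≤ m →
    ∃ v : List A, v.length = m ∧ u ++ v ++ w ∈ lang X

/-- Chain mixing: all but finitely many Markov approximations are topologically mixing. -/
def ChainMixing (X : Set (ℕ → A)) : Prop :=
  ∃ N : ℕ, ∀ n : ℕ, N ≤ n → MixingShift (markovApprox X n)

/-- `C` is the measure center of `X`: the smallest shift space contained in `X` of full
measure for every invariant measure of `X`. -/
def IsMeasureCenter (X C : Set (ℕ → A)) : Prop :=
  ShiftSpace C ∧ C ⊆ X ∧ (∀ μ ∈ Msigma X, μ C = 1) ∧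
  ∀ Y : Set (ℕ → A), ShiftSpace Y → Y ⊆ X → (∀ μ ∈ Msigma X, μ Y = 1) → C ⊆ Y

/-- Measure of the cylinder determined by a word of length `n`. -/
noncomputable def cylMeasure (μ : ProbabilityMeasure (ℕ → A)) {n : ℕ} (w : Fin n → A) : ℝ :=
  ((μ : Measure (ℕ → A)) {x | ∀ k : Fin n, x (k : ℕ) = w k}).toReal

/-- Entropy of the partition into cylinders of length `n`. -/
noncomputable def blockEntropy (μ : ProbabilityMeasure (ℕ → A)) (n : ℕ) : ℝ :=
  -∑ w : Fin n → A, cylMeasure μ w * Real.log (cylMeasure μ w)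

/-- Kolmogorov–Sinai entropy of a shift-invariant measure. -/
noncomputable def ksEntropy (μ : ProbabilityMeasure (ℕ → A)) : ℝ :=
  Filter.limsup (fun n => blockEntropy μ n / (n : ℝ)) Filter.atTop

/-- `μ` is ergodic for the shift. -/
def ErgodicPM (μ : ProbabilityMeasure (ℕ → A)) : Prop :=
  Ergodic shift (μ : Measure (ℕ → A))

/-- Ergodic measures are entropy dense in `M_σ(X)`. -/
def EntropyDense (X : Set (ℕ → A)) : Prop :=
  ∀ μ ∈ Msigma X, ∀ U : Set (ProbabilityMeasure (ℕ → A)), IsOpen U → μ ∈ U →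
    ∀ ε : ℝ, 0 < ε →
      ∃ ν ∈ Msigma X, ν ∈ U ∧ ErgodicPM ν ∧ |ksEntropy ν - ksEntropy μ| < ε

/-- Topological entropy of a shift space. -/
noncomputable def topEntropy (X : Set (ℕ → A)) : ℝ :=
  Filter.limsup (fun n => Real.log (Nat.card ↥(langN n X)) / (n : ℝ)) Filter.atTop

/-- The standard metric on the full shift. -/
noncomputable def rho (x y : ℕ → A) : ℝ :=
  open scoped Classical in
  if x = y then 0 else (2 : ℝ) ^ (-((sInf {j : ℕ | x j ≠ y j} : ℕ) : ℤ))

/-- Proximality of a shift space. -/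
def ProximalShift (X : Set (ℕ → A)) : Prop :=
  ∀ x ∈ X, ∀ y ∈ X,
    Filter.liminf (fun n => rho (shift^[n] x) (shift^[n] y)) Filter.atTop = 0

/-- Minimality of a shift space. -/
def MinimalShift (X : Set (ℕ → A)) : Prop :=
  ShiftSpace X ∧ ∀ Y : Set (ℕ → A), ShiftSpace Y → Y ⊆ X → Y = X

/-- An `A`-labeled directed multigraph on vertices `V` with edges `E`. -/
structure LabeledGraph (A V E : Type*) where
  src : E → V
  dst : E → V
  lab : E → A

namespace LabeledGraph

variable {A' V E : Type*}

/-- `es` is a path in `G` from `u` to `v`. -/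
def PathFromTo (G : LabeledGraph A' V E) (es : List E) (u v : V) : Prop :=
  es.Chain' (fun e f => G.dst e = G.src f) ∧
  es.head?.map G.src = some u ∧ es.getLast?.map G.dst = some v

/-- `G` is strongly connected. -/
def StronglyConnected (G : LabeledGraph A' V E) : Prop :=
  ∀ u v : V, ∃ es : List E, G.PathFromTo es u v

/-- `d` is the period of `G`: the gcd of lengths of closed paths. -/
def HasPeriod (G : LabeledGraph A' V E) (d : ℕ) : Prop :=
  (∀ (es : List E) (u : V), G.PathFromTo es u u → d ∣ es.length) ∧
  ∀ d' : ℕ, (∀ (es : List E) (u : V), G.PathFromTo es u u → d' ∣ es.length) → d' ∣ d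

/-- `b` is a safe symbol for `G`. -/
def SafeSymbol (G : LabeledGraph A' V E) (b : A') : Prop :=
  ∀ e : E, ∃ e' : E, G.src e' = G.src e ∧ G.dst e' = G.dst e ∧ G.lab e' = b

/-- The shift space presented by the labeled graph `G`: labels read along infinite paths. -/
def presents (G : LabeledGraph A' V E) : Set (ℕ → A') :=
  {x | ∃ e : ℕ → E, (∀ j, G.dst (e j) = G.src (e (j + 1))) ∧ ∀ j, x j = G.lab (e j)}

end LabeledGraph

/-- The coupling of a family of labeled graphs: an edge labeled `a` from `v` to `v'` exists
iff each `G k` has an edge from `v k` to `v' k` labeled `a`. -/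
def coupling {A' : Type*} {n : ℕ} {V E : Fin n → Type*}
    (G : ∀ k, LabeledGraph A' (V k) (E k)) :
    LabeledGraph A' (∀ k, V k) {p : (∀ k, E k) × A' // ∀ k, (G k).lab (p.1 k) = p.2} where
  src p := fun k => (G k).src (p.1.1 k)
  dst p := fun k => (G k).dst (p.1.1 k)
  lab p := p.1.2

/-- Sofic shift spaces: those presented by some finite labeled graph. -/
def Sofic (X : Set (ℕ → A)) : Prop :=
  ∃ (V E : Type) (_ : Fintype V) (_ : Fintype E) (G : LabeledGraph A V E),
    X = G.presents

/-- The coded shift generated by a finite set of words `B`: the closure of the set of all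
shifts of infinite concatenations of words from `B`. -/
def codedShift (B : Finset (List A)) : Set (ℕ → A) :=
  closure {x | ∃ (b : ℕ → List A) (k : ℕ), (∀ i, b i ∈ B) ∧ x = shift^[k] (concatSeq b)}


/-- The length of a shortest word in `B`. -/
noncomputable def minLen (B : Finset (List Bool)) : ℕ :=
  sInf (List.length '' (B : Set (List Bool)))

/-- The length of a longest word in `B`. -/
noncomputable def maxLen (B : Finset (List Bool)) : ℕ :=
  sSup (List.length '' (B : Set (List Bool)))


section Statement18Aux

open List

abbrev W18 := List Bool
abbrev Pt18 := ℕ → Bool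

lemma shift_iterate18 (x : Pt18) (k n : ℕ) : (shift^[k] x) n = x (n + k) := by
  induction k generalizing n with
  | zero => simp
  | succ k ih =>
      rw [Function.iterate_succ']
      show (shift (shift^[k] x)) n = _
      show (shift^[k] x) (n+1) = _
      rw [ih]; ring_nf

lemma ofFn_flatten_prefix18 (b : ℕ → W18) {M M' : ℕ} (h : M ≤ M') :
    (List.ofFn (fun i : Fin M => b i)).flatten <+: (List.ofFn (fun i : Fin M' => b i)).flatten := by
  obtain ⟨k, rfl⟩ := Nat.le.dest h
  rw [List.ofFn_add, List.flatten_append]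
  have : (List.ofFn fun i : Fin M => b (Fin.castAdd k i)) = List.ofFn (fun i : Fin M => b i) := by
    simp
  simp only [Fin.val_castLE]
  exact List.prefix_append _ _

lemma flatten_len_ge18 (b : ℕ → W18) (hb : ∀ i, b i ≠ []) (M : ℕ) :
    M ≤ (List.ofFn (fun i : Fin M => b i)).flatten.length := by
  rw [List.length_flatten, List.map_ofFn, List.sum_ofFn]
  calc M = ∑ _i : Fin M, 1 := by simp
  _ ≤ _ := by
      apply Finset.sum_le_sum
      intro i _
      exact Nat.one_le_iff_ne_zero.2 (by simpa using hb i)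

lemma prefix_getD_eq18 {L L' : W18} (h : L <+: L') {n : ℕ} (hn : n < L.length) :
    L'.getD n default = L.getD n default := by
  obtain ⟨r, rfl⟩ := h
  rw [List.getD_append _ _ _ _ hn]

lemma concatSeq_eq18 (b : ℕ → W18) (hb : ∀ i, b i ≠ []) {n M : ℕ}
    (hM : n < (List.ofFn (fun i : Fin M => b i)).flatten.length) :
    concatSeq b n = (List.ofFn (fun i : Fin M => b i)).flatten.getD n default := by
  unfold concatSeq
  have hlen : n < (List.ofFn (fun i : Fin (n+1) => b i)).flatten.length :=
    lt_of_lt_of_le (Nat.lt_succ_self n) (flatten_len_ge18 b hb (n+1))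
  rcases le_total (n+1) M with h | h
  · exact (prefix_getD_eq18 (ofFn_flatten_prefix18 b h) hlen).symm
  · exact prefix_getD_eq18 (ofFn_flatten_prefix18 b h) hM

lemma occursIn_of_getD18 {x : Pt18} {γ u : W18} (hpt : ∀ n < γ.length, x n = γ.getD n default)
    (h : u <:+: γ) : occursIn u x := by
  obtain ⟨p, q, rfl⟩ := h
  refine ⟨p.length, ?_⟩
  apply List.ext_getElem (by simp)
  intro k hk1 hk2
  have hlt : p.length + k < (p ++ u ++ q).length := by
    simp only [List.length_append]; omega
  have := hpt (p.length + k) hlt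
  rw [List.getD_eq_getElem _ _ hlt] at this
  have hlt2 : p.length + k < (p ++ u).length := by simp only [List.length_append]; omega
  have he : (p ++ u ++ q)[p.length + k]'hlt = u[k] := by
    rw [List.getElem_append_left hlt2]
    rw [List.getElem_append_right (by omega)]
    congr 1
    omega
  simp only [List.getElem_ofFn]
  exact (this.trans he).symm

lemma eq_slice_of_window18 {y : Pt18} {u F : W18} {i : ℕ}
    (hu : u = List.ofFn (fun k : Fin u.length => y (i + k)))
    (hF : ∀ n < F.length, y n = F.getD n default)
    (hle : i + u.length ≤ F.length) : u <:+: F := by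
  have hdt : u = (F.drop i).take u.length := by
    apply List.ext_getElem
    · simp; omega
    · intro k hk1 hk2
      have hik : i + k < F.length := by omega
      have h1 : ((F.drop i).take u.length)[k]'hk2 = F[i + k]'hik := by
        rw [List.getElem_take, List.getElem_drop]
      have h2 : u[k]'hk1 = y (i + k) := by
        rw [List.getElem_of_eq hu hk1]
        simp
      rw [h1, h2, hF (i + k) hik]
      exact List.getD_eq_getElem _ _ hik
  have key : (F.drop i).take u.length ++ F.drop (i + u.length) = F.drop i := by
    have h3 : F.drop (i + u.length) = (F.drop i).drop u.length := by
      rw [List.drop_drop]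
    rw [h3]
    exact List.take_append_drop _ _
  rw [← hdt] at key
  refine ⟨F.take i, F.drop (i + u.length), ?_⟩
  rw [List.append_assoc, key]
  exact List.take_append_drop _ _

lemma exists_gen_agree18 {Bn : Finset W18} {x : Pt18} (hx : x ∈ codedShift Bn) (M : ℕ) :
    ∃ (b : ℕ → W18) (k : ℕ), (∀ i, b i ∈ Bn) ∧ ∀ r < M, x r = (shift^[k] (concatSeq b)) r := by
  have hopen : IsOpen {y : Pt18 | ∀ r < M, y r = x r} := by
    have : {y : Pt18 | ∀ r < M, y r = x r} = ⋂ r ∈ Finset.range M, {y : Pt18 | y r = x r} := by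
      ext y; simp [Finset.mem_range]
    rw [this]
    apply isOpen_biInter_finset
    intro r _
    have h5 : {y : Pt18 | y r = x r} = (fun y : Pt18 => y r) ⁻¹' {x r} := rfl
    rw [h5]
    exact (continuous_apply r).isOpen_preimage _ (isOpen_discrete _)
  have hxU : x ∈ {y : Pt18 | ∀ r < M, y r = x r} := fun r _ => rfl
  have := (mem_closure_iff.1 hx) _ hopen hxU
  obtain ⟨z, hz1, b, k, hb, rfl⟩ := this
  exact ⟨b, k, hb, fun r hr => (hz1 r hr).symm⟩


lemma minLen_le18 {Bn : Finset W18} {b : W18} (hb : b ∈ Bn) : minLen Bn ≤ b.length :=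
  Nat.sInf_le ⟨b, hb, rfl⟩

lemma exists_minLen18 {Bn : Finset W18} (h : Bn.Nonempty) : ∃ b ∈ Bn, b.length = minLen Bn := by
  obtain ⟨b0, hb0⟩ := h
  have hne : (List.length '' (Bn : Set W18)).Nonempty := ⟨b0.length, b0, hb0, rfl⟩
  obtain ⟨b, hb, he⟩ := Nat.sInf_mem hne
  exact ⟨b, hb, he⟩

lemma le_maxLen18 {Bn : Finset W18} {b : W18} (hb : b ∈ Bn) : b.length ≤ maxLen Bn :=
  le_csSup ((Bn.finite_toSet.image _).bddAbove) ⟨b, hb, rfl⟩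

lemma exists_maxLen18 {Bn : Finset W18} (h : Bn.Nonempty) : ∃ b ∈ Bn, b.length = maxLen Bn := by
  obtain ⟨b0, hb0⟩ := h
  have hne : (List.length '' (Bn : Set W18)).Nonempty := ⟨b0.length, b0, hb0, rfl⟩
  obtain ⟨b, hb, he⟩ := Set.Nonempty.csSup_mem hne (Bn.finite_toSet.image _)
  exact ⟨b, hb, he⟩

lemma flatten_len_bounds18 {s l : ℕ} : ∀ (bs : List W18),
    (∀ b ∈ bs, s ≤ b.length ∧ b.length ≤ l) →
    bs.length * s ≤ bs.flatten.length ∧ bs.flatten.length ≤ bs.length * l := by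
  intro bs
  induction bs with
  | nil => simp
  | cons b bs ih =>
      intro h
      have h1 := h b (List.mem_cons_self)
      have h2 := ih (fun x hx => h x (List.mem_cons_of_mem _ hx))
      simp only [List.flatten_cons, List.length_append, List.length_cons, Nat.succ_mul]
      omega

lemma sum_interval18 {Bn : Finset W18} (hsl : minLen Bn ≤ maxLen Bn)
    (hfull : ∀ m, minLen Bn ≤ m → m ≤ maxLen Bn → ∃ b ∈ Bn, b.length = m) :
    ∀ j S, 1 ≤ j → j * minLen Bn ≤ S → S ≤ j * maxLen Bn →
    ∃ fs : List W18, fs.length = j ∧ (∀ b ∈ fs, b ∈ Bn) ∧ fs.flatten.length = S := by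
  intro j
  induction j with
  | zero => omega
  | succ j ih =>
      intro S h1 h2 h3
      rcases Nat.eq_zero_or_pos j with rfl | hj
      · simp only [Nat.zero_add, one_mul] at h2 h3
        obtain ⟨b, hb, he⟩ := hfull S h2 h3
        refine ⟨[b], rfl, by simp [hb], by simp [he]⟩
      · rw [Nat.succ_mul] at h2 h3
        have hmul := Nat.mul_le_mul_left j hsl
        rcases le_total S (j * maxLen Bn + minLen Bn) with hc | hc
        · obtain ⟨b, hb, he⟩ := hfull (minLen Bn) le_rfl hsl
          obtain ⟨fs, hf1, hf2, hf3⟩ := ih (S - minLen Bn) hj (by omega) (by omega)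
          refine ⟨b :: fs, by simp [hf1], ?_, ?_⟩
          · intro x hx
            rcases List.mem_cons.1 hx with rfl | hx
            · exact hb
            · exact hf2 x hx
          · show (b :: fs).flatten.length = S
            rw [List.flatten_cons, List.length_append, hf3, he]
            omega
        · obtain ⟨b, hb, he⟩ := hfull (S - j * maxLen Bn) (by omega) (by omega)
          obtain ⟨fs, hf1, hf2, hf3⟩ := ih (j * maxLen Bn) hj hmul le_rfl
          refine ⟨b :: fs, by simp [hf1], ?_, ?_⟩
          · intro x hx
            rcases List.mem_cons.1 hx with rfl | hx
            · exact hb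
            · exact hf2 x hx
          · show (b :: fs).flatten.length = S
            rw [List.flatten_cons, List.length_append, hf3, he]
            omega

structure Ctx18 where
  B : ℕ → Finset (List Bool)
  t : ℕ → ℕ
  τ : ℕ → List Bool
  hB1 : B 1 = {[false], [true, true]}
  hτ : ∀ n : ℕ, 1 ≤ n → ∃ l : List (List Bool), l.Perm (B n).toList ∧ τ n = l.flatten
  hrec : ∀ n : ℕ, 1 ≤ n → (B (n + 1) : Set (List Bool)) =
    {w | ∃ bs : List (List Bool), bs.length = t n ∧ (∀ b ∈ bs, b ∈ B n) ∧ w = bs.flatten ++ τ n}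
  hratio : ∀ n : ℕ, 1 ≤ n → ((minLen (B n) : ℝ) / (maxLen (B n) : ℝ) < 2 / 3)
  ht6 : ∀ n : ℕ, 1 ≤ n → ((2 * (minLen (B n) : ℝ) + 2 * (maxLen (B n) : ℝ) +
    3 * ((τ n).length : ℝ)) / (maxLen (B n) : ℝ) ≤ (t n : ℝ))

namespace Ctx18

variable (c : Ctx18)

noncomputable def s (n : ℕ) : ℕ := minLen (c.B n)
noncomputable def l (n : ℕ) : ℕ := maxLen (c.B n)
def T (n : ℕ) : ℕ := (c.τ n).length

lemma s_def (n : ℕ) : c.s n = minLen (c.B n) := rfl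
lemma l_def (n : ℕ) : c.l n = maxLen (c.B n) := rfl
lemma T_def (n : ℕ) : c.T n = (c.τ n).length := rfl

lemma mem_rec {n : ℕ} (hn : 1 ≤ n) {b' : W18} :
    b' ∈ c.B (n + 1) ↔ ∃ bs : List W18, bs.length = c.t n ∧ (∀ b ∈ bs, b ∈ c.B n) ∧
      b' = bs.flatten ++ c.τ n := by
  have h := c.hrec n hn
  rw [Set.ext_iff] at h
  have := h b'
  simpa using this

lemma tau_len {n : ℕ} (hn : 1 ≤ n) : c.T n = ∑ b ∈ c.B n, b.length := by
  obtain ⟨lst, hperm, hτeq⟩ := c.hτ n hn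
  show (c.τ n).length = _
  rw [hτeq, List.length_flatten, ← Finset.sum_map_toList]
  exact List.Perm.sum_eq (hperm.map _)

/-- The main structure induction: `B n` is nonempty, has no empty words, and realizes
every length between `s n` and `l n`. -/
lemma struct : ∀ n, 1 ≤ n → ((c.B n).Nonempty ∧ (∀ b ∈ c.B n, b ≠ []) ∧
    (∀ m, c.s n ≤ m → m ≤ c.l n → ∃ b ∈ c.B n, b.length = m)) := by
  intro n hn
  induction n, hn using Nat.le_induction with
  | base =>
      have hf : [false] ∈ c.B 1 := by rw [c.hB1]; simp
      have htt : [true, true] ∈ c.B 1 := by rw [c.hB1]; simp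
      have hmem : ∀ b ∈ c.B 1, b = [false] ∨ b = [true, true] := by
        intro b hb; rw [c.hB1] at hb; simpa using hb
      have hs1 : c.s 1 = 1 := by
        have h1 : c.s 1 ≤ 1 := by simpa [s_def] using minLen_le18 hf
        have h2 : 1 ≤ c.s 1 := by
          obtain ⟨b, hb, he⟩ := exists_minLen18 (Bn := c.B 1) ⟨_, hf⟩
          rw [s_def, ← he]
          rcases hmem b hb with rfl | rfl <;> simp
        omega
      have hl1 : c.l 1 = 2 := by
        have h1 : 2 ≤ c.l 1 := by simpa [l_def] using le_maxLen18 htt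
        have h2 : c.l 1 ≤ 2 := by
          obtain ⟨b, hb, he⟩ := exists_maxLen18 (Bn := c.B 1) ⟨_, hf⟩
          rw [l_def, ← he]
          rcases hmem b hb with rfl | rfl <;> simp
        omega
      refine ⟨⟨_, hf⟩, ?_, ?_⟩
      · intro b hb; rcases hmem b hb with rfl | rfl <;> simp
      · intro m h1 h2
        rw [hs1] at h1; rw [hl1] at h2
        interval_cases m
        · exact ⟨[false], hf, rfl⟩
        · exact ⟨[true, true], htt, rfl⟩
  | succ n hn ih =>
      obtain ⟨hne, hnoemp, hfull'⟩ := ih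
      have hfull : ∀ m, minLen (c.B n) ≤ m → m ≤ maxLen (c.B n) → ∃ b ∈ c.B n, b.length = m :=
        hfull'
      have hs_pos : 1 ≤ minLen (c.B n) := by
        obtain ⟨b, hb, he⟩ := exists_minLen18 hne
        have h0 : 0 < b.length := List.length_pos_iff.2 (hnoemp b hb)
        omega
      have hsl : minLen (c.B n) ≤ maxLen (c.B n) := by
        obtain ⟨b, hb, he⟩ := exists_minLen18 hne
        have := le_maxLen18 hb
        omega
      have hl_pos : 1 ≤ maxLen (c.B n) := le_trans hs_pos hsl
      have hl0 : (0 : ℝ) < (maxLen (c.B n) : ℝ) := by exact_mod_cast hl_pos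
      have ht1 : 1 ≤ c.t n := by
        have h6 := c.ht6 n hn
        have hnum : (0 : ℝ) < 2 * (minLen (c.B n) : ℝ) + 2 * (maxLen (c.B n) : ℝ) +
            3 * ((c.τ n).length : ℝ) := by
          have h1 : (1 : ℝ) ≤ (maxLen (c.B n) : ℝ) := by exact_mod_cast hl_pos
          have h2 : (0 : ℝ) ≤ (minLen (c.B n) : ℝ) := by positivity
          have h3 : (0 : ℝ) ≤ ((c.τ n).length : ℝ) := by positivity
          nlinarith
        have h0 : (0 : ℝ) < (c.t n : ℝ) := lt_of_lt_of_le (div_pos hnum hl0) h6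
        have h0' : 0 < c.t n := by exact_mod_cast h0
        omega
      have hTl : maxLen (c.B n) ≤ (c.τ n).length := by
        have htau : c.T n = ∑ b ∈ c.B n, b.length := c.tau_len hn
        rw [T_def] at htau
        rw [htau]
        obtain ⟨b, hb, he⟩ := exists_maxLen18 hne
        calc maxLen (c.B n) = b.length := he.symm
        _ ≤ _ := Finset.single_le_sum (fun _ _ => Nat.zero_le _) hb
      have hT1 : 1 ≤ (c.τ n).length := le_trans hl_pos hTl
      have hmb : ∀ b ∈ c.B n, minLen (c.B n) ≤ b.length ∧ b.length ≤ maxLen (c.B n) :=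
        fun b hb => ⟨minLen_le18 hb, le_maxLen18 hb⟩
      have hbnd : ∀ b' ∈ c.B (n + 1),
          c.t n * minLen (c.B n) + (c.τ n).length ≤ b'.length ∧
          b'.length ≤ c.t n * maxLen (c.B n) + (c.τ n).length := by
        intro b' hb'
        obtain ⟨bs, hlen, hbs, rfl⟩ := (c.mem_rec hn).1 hb'
        have hfb := flatten_len_bounds18 bs (fun b hb => hmb b (hbs b hb))
        rw [hlen] at hfb
        simp only [List.length_append]
        omega
      have hreal : ∀ S, c.t n * minLen (c.B n) ≤ S → S ≤ c.t n * maxLen (c.B n) →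
          ∃ b' ∈ c.B (n + 1), b'.length = S + (c.τ n).length := by
        intro S h1 h2
        obtain ⟨fs, hf1, hf2, hf3⟩ := sum_interval18 hsl hfull (c.t n) S ht1 h1 h2
        refine ⟨fs.flatten ++ c.τ n, (c.mem_rec hn).2 ⟨fs, hf1, hf2, rfl⟩, ?_⟩
        simp only [List.length_append, hf3]
      obtain ⟨bmin, hbmin, hbminlen⟩ := hreal (c.t n * minLen (c.B n)) le_rfl
        (Nat.mul_le_mul_left _ hsl)
      have hne' : (c.B (n + 1)).Nonempty := ⟨bmin, hbmin⟩
      have hsrec : minLen (c.B (n + 1)) = c.t n * minLen (c.B n) + (c.τ n).length := by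
        have h1 := minLen_le18 hbmin
        obtain ⟨b, hb, he⟩ := exists_minLen18 hne'
        have h2 := (hbnd b hb).1
        omega
      have hlrec : maxLen (c.B (n + 1)) = c.t n * maxLen (c.B n) + (c.τ n).length := by
        obtain ⟨bmax, hbmax, hbmaxlen⟩ := hreal (c.t n * maxLen (c.B n))
          (Nat.mul_le_mul_left _ hsl) le_rfl
        have h1 := le_maxLen18 hbmax
        obtain ⟨b, hb, he⟩ := exists_maxLen18 hne'
        have h2 := (hbnd b hb).2
        omega
      refine ⟨hne', ?_, ?_⟩
      · intro b' hb' hemp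
        have := (hbnd b' hb').1
        rw [hemp] at this
        simp only [List.length_nil] at this
        omega
      · intro m h1 h2
        rw [s_def, hsrec] at h1; rw [l_def, hlrec] at h2
        obtain ⟨b', hb', he'⟩ := hreal (m - (c.τ n).length) (by omega) (by omega)
        exact ⟨b', hb', by omega⟩

lemma bne {n : ℕ} (hn : 1 ≤ n) : (c.B n).Nonempty := (c.struct n hn).1

lemma noemp {n : ℕ} (hn : 1 ≤ n) : ∀ b ∈ c.B n, b ≠ [] := (c.struct n hn).2.1

lemma full {n : ℕ} (hn : 1 ≤ n) :
    ∀ m, c.s n ≤ m → m ≤ c.l n → ∃ b ∈ c.B n, b.length = m := (c.struct n hn).2.2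

lemma memb {n : ℕ} (hn : 1 ≤ n) : ∀ b ∈ c.B n, c.s n ≤ b.length ∧ b.length ≤ c.l n :=
  fun b hb => ⟨minLen_le18 hb, le_maxLen18 hb⟩

lemma s_pos {n : ℕ} (hn : 1 ≤ n) : 1 ≤ c.s n := by
  obtain ⟨b, hb, he⟩ := exists_minLen18 (c.bne hn)
  have h0 : 0 < b.length := List.length_pos_iff.2 (c.noemp hn b hb)
  rw [s_def]
  omega

lemma s_le_l {n : ℕ} (hn : 1 ≤ n) : c.s n ≤ c.l n := by
  obtain ⟨b, hb, he⟩ := exists_minLen18 (c.bne hn)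
  have := le_maxLen18 hb
  rw [s_def, l_def]
  omega

lemma l_pos {n : ℕ} (hn : 1 ≤ n) : 1 ≤ c.l n := le_trans (c.s_pos hn) (c.s_le_l hn)

lemma h3s {n : ℕ} (hn : 1 ≤ n) : 3 * c.s n + 1 ≤ 2 * c.l n := by
  have h : (c.s n : ℝ) / (c.l n : ℝ) < 2 / 3 := c.hratio n hn
  have hl0 : (0 : ℝ) < (c.l n : ℝ) := by exact_mod_cast c.l_pos hn
  rw [div_lt_div_iff₀ hl0 (by norm_num : (0:ℝ) < 3)] at h
  have h' : c.s n * 3 < 2 * c.l n := by exact_mod_cast h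
  omega

lemma T_ge {n : ℕ} (hn : 1 ≤ n) : c.s n + c.l n ≤ c.T n := by
  have hsl : c.s n < c.l n := by have := c.h3s hn; have := c.s_pos hn; omega
  obtain ⟨bs, hbs, hes⟩ := exists_minLen18 (c.bne hn)
  obtain ⟨bl, hbl, hel⟩ := exists_maxLen18 (c.bne hn)
  have hne : bs ≠ bl := by
    intro h
    rw [s_def, l_def, ← hes, ← hel, h] at hsl
    omega
  rw [c.tau_len hn]
  have hsub : {bs, bl} ⊆ c.B n := by
    intro x hx
    rcases Finset.mem_insert.1 hx with rfl | hx
    · exact hbs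
    · rw [Finset.mem_singleton.1 hx]; exact hbl
  calc c.s n + c.l n = ∑ b ∈ ({bs, bl} : Finset W18), b.length := by
        rw [Finset.sum_insert (by simpa using hne), Finset.sum_singleton, hes, hel]
        rfl
  _ ≤ _ := Finset.sum_le_sum_of_subset hsub

lemma T_ge_l {n : ℕ} (hn : 1 ≤ n) : c.l n ≤ c.T n := by
  have h1 := c.T_ge hn
  have h2 := c.s_pos hn
  omega

lemma T_pos {n : ℕ} (hn : 1 ≤ n) : 1 ≤ c.T n := le_trans (c.l_pos hn) (c.T_ge_l hn)

lemma ht6N {n : ℕ} (hn : 1 ≤ n) : 2 * c.s n + 2 * c.l n + 3 * c.T n ≤ c.t n * c.l n := by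
  have hl0 : (0 : ℝ) < (c.l n : ℝ) := by exact_mod_cast c.l_pos hn
  have h : (2 * (c.s n : ℝ) + 2 * (c.l n : ℝ) + 3 * (c.T n : ℝ)) / (c.l n : ℝ) ≤ (c.t n : ℝ) :=
    c.ht6 n hn
  rw [div_le_iff₀ hl0] at h
  have h' : 2 * (c.s n : ℝ) + 2 * (c.l n : ℝ) + 3 * (c.T n : ℝ) ≤ (c.t n : ℝ) * (c.l n : ℝ) := h
  exact_mod_cast h'

lemma t_ge6 {n : ℕ} (hn : 1 ≤ n) : 6 ≤ c.t n := by
  have h := c.ht6N hn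
  have hT := c.T_ge hn
  have hs := c.s_pos hn
  have hl := c.l_pos hn
  by_contra hc
  push_neg at hc
  have h5 : c.t n * c.l n ≤ 5 * c.l n := Nat.mul_le_mul_right _ (by omega)
  omega

lemma s_rec {n : ℕ} (hn : 1 ≤ n) : c.s (n + 1) = c.t n * c.s n + c.T n := by
  obtain ⟨hne, hnoemp, hfull⟩ := c.struct n hn
  have hsl := c.s_le_l hn
  have ht1 : 1 ≤ c.t n := le_trans (by norm_num) (c.t_ge6 hn)
  obtain ⟨fs, hf1, hf2, hf3⟩ := sum_interval18 hsl hfull (c.t n) (c.t n * c.s n) ht1 le_rfl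
    (Nat.mul_le_mul_left _ hsl)
  have hbmin : fs.flatten ++ c.τ n ∈ c.B (n + 1) := (c.mem_rec hn).2 ⟨fs, hf1, hf2, rfl⟩
  have h1 : minLen (c.B (n + 1)) ≤ c.t n * c.s n + c.T n := by
    have hx := minLen_le18 hbmin
    simp only [List.length_append, hf3] at hx
    rw [T_def]
    exact hx
  have h2 : c.t n * c.s n + c.T n ≤ minLen (c.B (n + 1)) := by
    obtain ⟨b, hb, he⟩ := exists_minLen18 (c.bne (by omega : 1 ≤ n + 1))
    obtain ⟨bs, hlen, hbs, rfl⟩ := (c.mem_rec hn).1 hb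
    have hfb := (flatten_len_bounds18 bs (fun b hb => c.memb hn b (hbs b hb))).1
    rw [hlen] at hfb
    simp only [List.length_append] at he
    rw [T_def]
    omega
  rw [s_def]
  omega

lemma l_rec {n : ℕ} (hn : 1 ≤ n) : c.l (n + 1) = c.t n * c.l n + c.T n := by
  obtain ⟨hne, hnoemp, hfull⟩ := c.struct n hn
  have hsl := c.s_le_l hn
  have ht1 : 1 ≤ c.t n := le_trans (by norm_num) (c.t_ge6 hn)
  obtain ⟨fs, hf1, hf2, hf3⟩ := sum_interval18 hsl hfull (c.t n) (c.t n * c.l n) ht1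
    (Nat.mul_le_mul_left _ hsl) le_rfl
  have hbmax : fs.flatten ++ c.τ n ∈ c.B (n + 1) := (c.mem_rec hn).2 ⟨fs, hf1, hf2, rfl⟩
  have h1 : c.t n * c.l n + c.T n ≤ maxLen (c.B (n + 1)) := by
    have hx := le_maxLen18 hbmax
    simp only [List.length_append, hf3] at hx
    rw [T_def]
    exact hx
  have h2 : maxLen (c.B (n + 1)) ≤ c.t n * c.l n + c.T n := by
    obtain ⟨b, hb, he⟩ := exists_maxLen18 (c.bne (by omega : 1 ≤ n + 1))
    obtain ⟨bs, hlen, hbs, rfl⟩ := (c.mem_rec hn).1 hb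
    have hfb := (flatten_len_bounds18 bs (fun b hb => c.memb hn b (hbs b hb))).2
    rw [hlen] at hfb
    simp only [List.length_append] at he
    rw [T_def]
    omega
  rw [l_def]
  omega

lemma n_le_s : ∀ n, 1 ≤ n → n ≤ c.s n := by
  intro n hn
  induction n, hn using Nat.le_induction with
  | base => exact c.s_pos le_rfl
  | succ n hn ih =>
      have hrec := c.s_rec hn
      have hT := c.T_ge hn
      have ht1 : 1 ≤ c.t n := le_trans (by norm_num) (c.t_ge6 hn)
      have hm : c.s n ≤ c.t n * c.s n := Nat.le_mul_of_pos_left _ ht1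
      have := c.s_pos hn
      have := c.l_pos hn
      omega

end Ctx18


lemma infix_of_prefix_window18 {p u q P : W18} (hP : P <+: p ++ u ++ q)
    (hlen : p.length + u.length ≤ P.length) : u <:+: P := by
  obtain ⟨r, hr⟩ := hP
  have hql : P.length ≤ (p ++ u ++ q).length := by
    rw [← hr]; simp
  simp only [List.length_append] at hql
  have htk : P = (p ++ u ++ q).take P.length := by
    rw [← hr, List.take_append, List.take_of_length_le le_rfl,
      Nat.sub_self, List.take_zero, List.append_nil]
  have main : (p ++ u ++ q).take P.length =
      p ++ u ++ q.take (P.length - p.length - u.length) := by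
    rw [List.append_assoc, List.take_append,
      List.take_of_length_le (by omega : p.length ≤ P.length),
      List.take_append,
      List.take_of_length_le (by omega : u.length ≤ P.length - p.length),
      ← List.append_assoc]
  exact ⟨p, q.take (P.length - p.length - u.length), by rw [← main, ← htk]⟩

namespace Ctx18

variable (c : Ctx18)

noncomputable def fill (n : ℕ) : W18 :=
  if h : (c.B n).Nonempty then h.choose else []

lemma fill_mem {n : ℕ} (hn : 1 ≤ n) : c.fill n ∈ c.B n := by
  rw [fill, dif_pos (c.bne hn)]
  exact (c.bne hn).choose_spec

/-- Decomposition of a level-`m` word into level-`j` words. -/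
lemma decomp {j m : ℕ} (hj : 1 ≤ j) (hjm : j ≤ m) :
    ∀ β ∈ c.B m, ∃ ws : List W18, (∀ w ∈ ws, w ∈ c.B j) ∧ ws.flatten = β := by
  induction m, hjm using Nat.le_induction with
  | base =>
      intro β hβ
      exact ⟨[β], by simp [hβ], by simp⟩
  | succ m hm ih =>
      intro β hβ
      have hm1 : 1 ≤ m := le_trans hj hm
      obtain ⟨bs, hlen, hbs, rfl⟩ := (c.mem_rec hm1).1 hβ
      obtain ⟨lst, hperm, hτeq⟩ := c.hτ m hm1
      have hlst : ∀ w ∈ lst, w ∈ c.B m := fun w hw =>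
        Finset.mem_toList.1 (hperm.mem_iff.1 hw)
      have hall : ∀ b ∈ bs ++ lst, b ∈ c.B m := by
        intro b hb
        rcases List.mem_append.1 hb with hb | hb
        · exact hbs b hb
        · exact hlst b hb
      suffices h : ∀ ys : List W18, (∀ b ∈ ys, b ∈ c.B m) →
          ∃ ws : List W18, (∀ w ∈ ws, w ∈ c.B j) ∧ ws.flatten = ys.flatten by
        obtain ⟨ws, h1, h2⟩ := h (bs ++ lst) hall
        refine ⟨ws, h1, ?_⟩
        rw [h2, List.flatten_append, hτeq]
      intro ys
      induction ys with
      | nil => exact fun _ => ⟨[], by simp, by simp⟩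
      | cons y ys ihy =>
          intro hy
          obtain ⟨ws1, hw1, he1⟩ := ih y (hy y (List.mem_cons_self))
          obtain ⟨ws2, hw2, he2⟩ := ihy (fun b hb => hy b (List.mem_cons_of_mem _ hb))
          refine ⟨ws1 ++ ws2, ?_, ?_⟩
          · intro w hw
            rcases List.mem_append.1 hw with hw | hw
            · exact hw1 w hw
            · exact hw2 w hw
          · rw [List.flatten_append, he1, he2, List.flatten_cons]

/-- Every factor of a word of some level belongs to the language of the intersection. -/
lemma infix_mem_lang {k : ℕ} (hk : 1 ≤ k) {γ u : W18} (hγ : γ ∈ c.B k) (hu : u <:+: γ) :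
    u ∈ lang (⋂ n : ℕ, codedShift (c.B (n + 1))) := by
  classical
  -- the expanding sequence of words
  let β : ℕ → W18 := fun i => Nat.rec γ
    (fun i βi => βi ++ ((List.replicate (c.t (k + i) - 1) (c.fill (k + i))).flatten
      ++ c.τ (k + i))) i
  have hβ0 : β 0 = γ := rfl
  have hβs : ∀ i, β (i + 1) = β i ++
      ((List.replicate (c.t (k + i) - 1) (c.fill (k + i))).flatten ++ c.τ (k + i)) :=
    fun i => rfl
  have hki : ∀ i, 1 ≤ k + i := fun i => le_trans hk (Nat.le_add_right _ _)
  have hmemβ : ∀ i, β i ∈ c.B (k + i) := by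
    intro i
    induction i with
    | zero => exact hγ
    | succ i ihi =>
        have ht1 : 1 ≤ c.t (k + i) := le_trans (by norm_num) (c.t_ge6 (hki i))
        have : β (i + 1) ∈ c.B ((k + i) + 1) := by
          refine (c.mem_rec (hki i)).2
            ⟨β i :: List.replicate (c.t (k + i) - 1) (c.fill (k + i)), ?_, ?_, ?_⟩
          · simp only [List.length_cons, List.length_replicate]
            omega
          · intro b hb
            rcases List.mem_cons.1 hb with rfl | hb
            · exact ihi
            · rw [List.eq_of_mem_replicate hb]
              exact c.fill_mem (hki i)
          · rw [hβs i, List.flatten_cons, List.append_assoc]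
        have heq : k + (i + 1) = (k + i) + 1 := by omega
        rw [heq]
        exact this
  have hlenβ : ∀ i, γ.length + i ≤ (β i).length := by
    intro i
    induction i with
    | zero => simp [hβ0]
    | succ i ihi =>
        have hT1 : 1 ≤ c.T (k + i) := c.T_pos (hki i)
        rw [hβs i]
        simp only [List.length_append]
        have : 1 ≤ (c.τ (k + i)).length := hT1
        omega
  have hpre : ∀ i j, i ≤ j → β i <+: β j := by
    intro i j hij
    induction j, hij using Nat.le_induction with
    | base => exact List.prefix_refl _
    | succ j hij ihj =>
        refine ihj.trans ?_
        rw [hβs j]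
        exact List.prefix_append _ _
  set x : Pt18 := fun n => (β (n + 1)).getD n default with hxdef
  have hxval : ∀ i n, n < (β i).length → x n = (β i).getD n default := by
    intro i n hn
    have hn1 : n < (β (n + 1)).length := by
      have := hlenβ (n + 1)
      omega
    rcases le_total i (n + 1) with h | h
    · exact prefix_getD_eq18 (hpre i (n + 1) h) hn
    · exact (prefix_getD_eq18 (hpre (n + 1) i h) hn1).symm
  have hγne : 1 ≤ γ.length := by
    have := c.noemp hk γ hγ
    have := List.length_pos_iff.2 this
    omega
  have hxmem : ∀ j, 1 ≤ j → x ∈ codedShift (c.B j) := by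
    intro j hj
    have hnb : ∀ i : ℕ, ∃ ws : List W18, (∀ w ∈ ws, w ∈ c.B j) ∧
        ws.flatten = β (i + j) ∧ ws ≠ [] := by
      intro i
      obtain ⟨ws, h1, h2⟩ := c.decomp hj (by omega : j ≤ k + (i + j)) _ (hmemβ (i + j))
      refine ⟨ws, h1, h2, ?_⟩
      intro hemp
      rw [hemp] at h2
      have := hlenβ (i + j)
      simp only [List.flatten_nil] at h2
      rw [← h2] at this
      simp at this
      omega
    choose ws hws1 hws2 hws3 using hnb
    have hpos : ∀ i, 0 < (ws i).length := fun i => List.length_pos_iff.2 (hws3 i)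
    set b : ℕ → ℕ → W18 := fun i r => (ws i).getD (r % (ws i).length) [] with hbdef
    have hbmem : ∀ i r, b i r ∈ c.B j := by
      intro i r
      have hlt : r % (ws i).length < (ws i).length := Nat.mod_lt _ (hpos i)
      have : (ws i).getD (r % (ws i).length) [] = (ws i)[r % (ws i).length] :=
        List.getD_eq_getElem _ _ hlt
      rw [hbdef]
      simp only []
      rw [this]
      exact hws1 i _ (List.getElem_mem _)
    have hbne : ∀ i r, b i r ≠ [] := fun i r => c.noemp hj _ (hbmem i r)
    have hofn : ∀ i, List.ofFn (fun r : Fin (ws i).length => b i r) = ws i := by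
      intro i
      apply List.ext_getElem (by simp)
      intro r h1 h2
      simp only [List.getElem_ofFn]
      rw [hbdef]
      simp only []
      have hrr : r % (ws i).length = r := Nat.mod_eq_of_lt (by simpa using h2)
      rw [hrr]
      exact List.getD_eq_getElem _ _ _
    set z : ℕ → Pt18 := fun i => concatSeq (b i) with hzdef
    have hzmem : ∀ i, z i ∈ {x : Pt18 | ∃ (bb : ℕ → List Bool) (kk : ℕ),
        (∀ i, bb i ∈ c.B j) ∧ x = shift^[kk] (concatSeq bb)} := by
      intro i
      exact ⟨b i, 0, hbmem i, by simp [hzdef]⟩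
    have hzagree : ∀ i n, n < (β (i + j)).length → z i n = x n := by
      intro i n hn
      have hflat : (List.ofFn (fun r : Fin (ws i).length => b i r)).flatten = β (i + j) := by
        rw [hofn i]
        exact hws2 i
      have hn' : n < (List.ofFn (fun r : Fin (ws i).length => b i r)).flatten.length := by
        rw [hflat]; exact hn
      rw [hzdef]
      simp only []
      rw [concatSeq_eq18 (b i) (hbne i) hn']
      have hx2 := hxval (i + j) n hn
      rw [hx2, hflat]
    have htend : Filter.Tendsto z Filter.atTop (nhds x) := by
      rw [tendsto_pi_nhds]
      intro n
      have : ∀ i ≥ n + 1, z i n = x n := by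
        intro i hi
        apply hzagree
        have := hlenβ (i + j)
        omega
      refine Filter.Tendsto.congr' ?_ tendsto_const_nhds
      filter_upwards [Filter.eventually_ge_atTop (n + 1)] with i hi
      exact (this i hi).symm
    exact mem_closure_of_tendsto htend (Filter.Eventually.of_forall hzmem)
  refine ⟨x, Set.mem_iInter.2 fun n => hxmem (n + 1) (by omega), ?_⟩
  refine occursIn_of_getD18 (γ := γ) ?_ hu
  intro n hn
  exact hxval 0 n (by rw [hβ0]; exact hn)

/-- A word of the language is a factor of a finite concatenation of level-`n` words. -/
lemma lang_infix_concat {n : ℕ} (hn : 1 ≤ n) {u : W18}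
    (hu : u ∈ lang (⋂ m : ℕ, codedShift (c.B (m + 1)))) :
    ∃ bs : List W18, (∀ b ∈ bs, b ∈ c.B n) ∧ u <:+: bs.flatten := by
  obtain ⟨x, hx, i, hocc⟩ := hu
  have hxn : x ∈ codedShift (c.B n) := by
    have h := Set.mem_iInter.1 hx (n - 1)
    have hn' : n - 1 + 1 = n := by omega
    rw [hn'] at h
    exact h
  obtain ⟨b, k, hb, hagree⟩ := exists_gen_agree18 hxn (i + u.length)
  have hbne : ∀ r, b r ≠ [] := fun r => c.noemp hn _ (hb r)
  set M := k + i + u.length with hM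
  have hFlen : M ≤ (List.ofFn (fun r : Fin M => b r)).flatten.length :=
    flatten_len_ge18 b hbne M
  have hu2 : u = List.ofFn (fun j : Fin u.length => concatSeq b ((k + i) + j)) := by
    conv_lhs => rw [hocc]
    congr 1
    funext j
    have hj : i + (j : ℕ) < i + u.length := by
      have := j.2
      omega
    rw [hagree (i + j) hj, shift_iterate18]
    congr 1
    omega
  refine ⟨List.ofFn (fun r : Fin M => b r), ?_, ?_⟩
  · intro bb hbb
    obtain ⟨r, hr⟩ := List.mem_ofFn.1 hbb
    rw [← hr]
    exact hb r
  · exact eq_slice_of_window18 hu2 (fun r hr => concatSeq_eq18 b hbne hr) (by omega)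

lemma infix_two_blocks {n : ℕ} (hn : 1 ≤ n) : ∀ (bs : List W18), (∀ b ∈ bs, b ∈ c.B n) →
    ∀ u : W18, 1 ≤ u.length → u.length ≤ c.s n → u <:+: bs.flatten →
    ∃ b₁ b₂, b₁ ∈ c.B n ∧ b₂ ∈ c.B n ∧ u <:+: (b₁ ++ b₂) := by
  intro bs
  induction bs with
  | nil =>
      intro _ u h1 _ hinf
      rw [List.flatten_nil] at hinf
      have := List.eq_nil_of_infix_nil hinf
      rw [this] at h1
      simp at h1
  | cons b rest ih =>
      intro hmem u h1 h2 hinf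
      obtain ⟨p, q, hpq⟩ := hinf
      rw [List.flatten_cons] at hpq
      by_cases hc : b.length ≤ p.length
      · -- strictly inside the tail
        have hdrop := congrArg (List.drop b.length) hpq
        rw [List.drop_append_of_le_length (by simp only [List.length_append]; omega)] at hdrop
        rw [List.drop_append_of_le_length hc] at hdrop
        rw [List.drop_left] at hdrop
        exact ih (fun x hx => hmem x (List.mem_cons_of_mem _ hx)) u h1 h2
          ⟨p.drop b.length, q, hdrop⟩
      · push_neg at hc
        by_cases hc2 : p.length + u.length ≤ b.length
        · have hbpre : b <+: p ++ u ++ q := ⟨rest.flatten, hpq.symm⟩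
          have huin : u <:+: b := infix_of_prefix_window18 hbpre hc2
          exact ⟨b, b, hmem b (List.mem_cons_self), hmem b (List.mem_cons_self),
            huin.trans ⟨[], b, by simp⟩⟩
        · push_neg at hc2
          rcases rest with _ | ⟨b', rest'⟩
          · exfalso
            have : p ++ u ++ q = b ++ [] := by simpa using hpq
            have hlen := congrArg List.length this
            simp only [List.length_append, List.length_nil] at hlen
            omega
          · have hb'mem : b' ∈ c.B n := hmem b' (List.mem_cons_of_mem _ (List.mem_cons_self))
            have hb'len : c.s n ≤ b'.length := (c.memb hn b' hb'mem).1
            have hbb' : (b ++ b') <+: p ++ u ++ q := by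
              rw [hpq, List.flatten_cons, ← List.append_assoc]
              exact List.prefix_append _ _
            have hlen2 : p.length + u.length ≤ (b ++ b').length := by
              simp only [List.length_append]
              omega
            exact ⟨b, b', hmem b (List.mem_cons_self), hb'mem,
              infix_of_prefix_window18 hbb' hlen2⟩

lemma chooseJ {sv lv bound S : ℕ} (hs : 1 ≤ sv) (h3 : 3 * sv + 1 ≤ 2 * lv) (hb : 2 ≤ bound)
    (h1 : 2 * sv ≤ S) (h2 : S ≤ bound * lv) :
    ∃ j, 2 ≤ j ∧ j ≤ bound ∧ j * sv ≤ S ∧ S ≤ j * lv := by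
  have hdiv2 : 2 ≤ S / sv := (Nat.le_div_iff_mul_le hs).2 (by omega)
  refine ⟨min bound (S / sv), le_min hb hdiv2, min_le_left _ _, ?_, ?_⟩
  · have hd : (S / sv) * sv ≤ S := Nat.div_mul_le_self _ _
    calc (min bound (S / sv)) * sv ≤ (S / sv) * sv :=
          Nat.mul_le_mul_right _ (min_le_right _ _)
    _ ≤ S := hd
  · rcases le_total bound (S / sv) with h | h
    · rw [min_eq_left h]; exact h2
    · rw [min_eq_right h]
      have hlt : S < (S / sv + 1) * sv := (Nat.div_lt_iff_lt_mul hs).1 (Nat.lt_succ_self _)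
      rw [Nat.succ_mul] at hlt
      set j := S / sv with hj
      have hls : sv ≤ lv := by omega
      have hmono : j * sv + j * (lv - sv) = j * lv := by
        rw [← Nat.mul_add]
        congr 1
        omega
      have h5 : 2 * (lv - sv) ≤ j * (lv - sv) := Nat.mul_le_mul_right _ hdiv2
      omega

lemma pick {n j S : ℕ} (hn : 1 ≤ n) (hj : 1 ≤ j) (h1 : j * c.s n ≤ S) (h2 : S ≤ j * c.l n) :
    ∃ fs : List W18, fs.length = j ∧ (∀ b ∈ fs, b ∈ c.B n) ∧ fs.flatten.length = S :=
  sum_interval18 (c.s_le_l hn) (c.full hn) j S hj h1 h2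

lemma piece {n bound S : ℕ} (hn : 1 ≤ n) (hb : 2 ≤ bound) (hbt : bound ≤ c.t n - 1)
    (h1 : 2 * c.s n ≤ S) (h2 : S ≤ bound * c.l n) :
    ∃ fs : List W18, fs.length ≤ c.t n - 1 ∧ (∀ b ∈ fs, b ∈ c.B n) ∧
      fs.flatten.length = S := by
  obtain ⟨j, hj1, hj2, hj3, hj4⟩ := chooseJ (c.s_pos hn) (c.h3s hn) hb h1 h2
  obtain ⟨fs, hf1, hf2, hf3⟩ := c.pick hn (by omega) hj3 hj4
  exact ⟨fs, by omega, hf2, hf3⟩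

lemma split {n D : ℕ} (hn : 1 ≤ n) (h1 : 2 * c.s n ≤ D)
    (h2 : D ≤ 2 * ((c.t n - 1) * c.l n)) :
    ∃ fs₁ fs₂ : List W18, fs₁.length ≤ c.t n - 1 ∧ fs₂.length ≤ c.t n - 1 ∧
      (∀ b ∈ fs₁, b ∈ c.B n) ∧ (∀ b ∈ fs₂, b ∈ c.B n) ∧
      fs₁.flatten.length + fs₂.flatten.length = D := by
  have hs1 := c.s_pos hn
  have h3 := c.h3s hn
  have ht := c.t_ge6 hn
  have hsl := c.s_le_l hn
  have hb2 : 2 ≤ c.t n - 1 := by omega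
  have h5l : 5 * c.l n ≤ (c.t n - 1) * c.l n := Nat.mul_le_mul_right _ (by omega)
  have h4s : 4 * c.s n ≤ (c.t n - 1) * c.l n := by omega
  rcases le_total D ((c.t n - 1) * c.l n) with hc | hc
  · obtain ⟨fs, hf1, hf2, hf3⟩ := c.piece hn hb2 le_rfl h1 hc
    exact ⟨fs, [], hf1, by simp, hf2, by simp, by simp [hf3]⟩
  · rcases le_total (D - (c.t n - 1) * c.l n) (2 * c.s n) with hx | hx
    · obtain ⟨fs₂, hg1, hg2, hg3⟩ := c.piece hn hb2 le_rfl le_rfl (by omega)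
      obtain ⟨fs₁, hf1, hf2, hf3⟩ := c.piece hn hb2 le_rfl
        (by omega : 2 * c.s n ≤ D - 2 * c.s n) (by omega)
      exact ⟨fs₁, fs₂, hf1, hg1, hf2, hg2, by omega⟩
    · obtain ⟨fs₂, hg1, hg2, hg3⟩ := c.piece hn hb2 le_rfl hx (by omega)
      obtain ⟨fs₁, hf1, hf2, hf3⟩ := c.piece hn hb2 le_rfl (by omega)
        (le_refl ((c.t n - 1) * c.l n))
      exact ⟨fs₁, fs₂, hf1, hg1, hf2, hg2, by omega⟩

lemma mk_word {n : ℕ} (hn : 1 ≤ n) {bs : List W18} (hlen : bs.length ≤ c.t n)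
    (hmem : ∀ b ∈ bs, b ∈ c.B n) :
    (bs ++ List.replicate (c.t n - bs.length) (c.fill n)).flatten ++ c.τ n ∈ c.B (n + 1) := by
  refine (c.mem_rec hn).2 ⟨_, ?_, ?_, rfl⟩
  · simp only [List.length_append, List.length_replicate]
    omega
  · intro b hb
    rcases List.mem_append.1 hb with hb | hb
    · exact hmem b hb
    · rw [List.eq_of_mem_replicate hb]
      exact c.fill_mem hn

/-- The direct construction: realizing a gap `m` in the window at level `n`. -/
lemma direct (u w : W18) (n : ℕ) (hn : 2 ≤ n) (p q p' q' : W18)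
    (hα : (p ++ u ++ q) ∈ c.B n) (hα' : (p' ++ w ++ q') ∈ c.B n)
    (m : ℕ) (hm1 : q.length + p'.length + 2 * c.s n ≤ m)
    (hm2 : m ≤ q.length + p'.length + 3 * c.T n + 2 * (c.t n * c.s n)) :
    ∃ (k : ℕ) (γ v : W18), 1 ≤ k ∧ γ ∈ c.B k ∧ v.length = m ∧ (u ++ v ++ w) <:+: γ := by
  have hn1 : 1 ≤ n := by omega
  have hn1' : 1 ≤ n + 1 := by omega
  have hs1 := c.s_pos hn1
  have h3 := c.h3s hn1
  have ht := c.t_ge6 hn1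
  have ht' := c.t_ge6 hn1'
  have hsl := c.s_le_l hn1
  have hTg := c.T_ge hn1
  have h6 := c.ht6N hn1
  have hsrec := c.s_rec hn1
  have hlrec := c.l_rec hn1
  have P1 : 3 * (c.t n * c.s n) + c.t n ≤ 2 * (c.t n * c.l n) := by
    have h' : c.t n * (3 * c.s n + 1) ≤ c.t n * (2 * c.l n) := Nat.mul_le_mul_left _ h3
    have e1 : c.t n * (3 * c.s n + 1) = 3 * (c.t n * c.s n) + c.t n := by ring
    have e2 : c.t n * (2 * c.l n) = 2 * (c.t n * c.l n) := by ring
    omega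
  have P3 : c.l n ≤ c.t n * c.l n := Nat.le_mul_of_pos_left _ (by omega)
  have P4 : c.s n ≤ c.t n * c.s n := Nat.le_mul_of_pos_left _ (by omega)
  have P5 : (c.t n - 2) * c.l n = c.t n * c.l n - 2 * c.l n := by
    rw [Nat.sub_mul]
  have P6 : (c.t n - 1) * c.l n = c.t n * c.l n - 1 * c.l n := by
    rw [Nat.sub_mul]
  have P7 : c.t n * c.s n ≤ c.t n * c.l n := Nat.mul_le_mul_left _ hsl
  set a := q.length with ha
  set cc := p'.length with hcc
  rcases le_total m (a + cc + (c.t n - 2) * c.l n) with hcase | hcase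
  · -- R1 : single word of level n+1
    set S := m - a - cc with hS
    obtain ⟨j, hj1, hj2, hj3, hj4⟩ := chooseJ hs1 h3 (by omega : 2 ≤ c.t n - 2)
      (by omega : 2 * c.s n ≤ S) (by omega : S ≤ (c.t n - 2) * c.l n)
    obtain ⟨fs, hf1, hf2, hf3⟩ := c.pick hn1 (by omega) hj3 hj4
    set bs : List W18 := (p ++ u ++ q) :: (fs ++ [p' ++ w ++ q']) with hbs
    have hbslen : bs.length ≤ c.t n := by
      simp only [hbs, List.length_cons, List.length_append, List.length_nil, hf1]
      omega
    have hbsmem : ∀ b ∈ bs, b ∈ c.B n := by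
      intro b hb
      rcases List.mem_cons.1 hb with rfl | hb
      · exact hα
      · rcases List.mem_append.1 hb with hb | hb
        · exact hf2 b hb
        · rw [List.mem_singleton.1 hb]; exact hα'
    refine ⟨n + 1, _, q ++ fs.flatten ++ p', by omega, c.mk_word hn1 hbslen hbsmem, ?_, ?_⟩
    · simp only [List.length_append, hf3]
      omega
    · refine ⟨p, q' ++ (List.replicate (c.t n - bs.length) (c.fill n)).flatten ++ c.τ n, ?_⟩
      simp only [hbs, List.flatten_append, List.flatten_cons, List.flatten_nil,
        List.append_assoc, List.append_nil]
  · -- R2 : spanning two words of level n+1, inside a word of level n+2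
    set E := m - a - cc - c.T n with hE
    have hE1 : 2 * c.s n ≤ E := by omega
    have hE2 : E ≤ 2 * (c.t n * c.s n) + 2 * c.T n := by omega
    have hmid : ∃ (fsC : List W18) (D : ℕ), fsC.length ≤ 1 ∧
        (∀ b ∈ fsC, b ∈ c.B (n + 1)) ∧ 2 * c.s n ≤ D ∧
        D ≤ 2 * ((c.t n - 1) * c.l n) ∧ D + fsC.flatten.length = E := by
      rcases le_total E (2 * ((c.t n - 1) * c.l n)) with hc | hc
      · exact ⟨[], E, by simp, by simp, hE1, hc, by simp⟩
      · set L := max (c.s (n + 1)) (E - 2 * ((c.t n - 1) * c.l n)) with hL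
        have hLs : c.s (n + 1) ≤ L := le_max_left _ _
        have hLl : L ≤ c.l (n + 1) := by
          rw [hL]
          apply max_le
          · rw [hsrec, hlrec]; omega
          · rw [hlrec]; omega
        obtain ⟨fsC, hC1, hC2, hC3⟩ := c.pick hn1' le_rfl (by simpa using hLs)
          (by simpa using hLl)
        refine ⟨fsC, E - L, by omega, hC2, ?_, ?_, by omega⟩
        · rcases le_total (E - 2 * ((c.t n - 1) * c.l n)) (c.s (n + 1)) with hx | hx
          · rw [hL, max_eq_left hx]
            rw [hsrec] at hx ⊢
            omega
          · rw [hL, max_eq_right hx]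
            omega
        · rw [hL]
          rcases le_total (E - 2 * ((c.t n - 1) * c.l n)) (c.s (n + 1)) with hx | hx
          · rw [max_eq_left hx, hsrec]
            omega
          · rw [max_eq_right hx]
            omega
    obtain ⟨fsC, D, hC1, hC2, hD1, hD2, hDE⟩ := hmid
    obtain ⟨fs₁, fs₂, hf1, hg1, hf2, hg2, hfg⟩ := c.split hn1 hD1 hD2
    set Abs : List W18 := List.replicate (c.t n - 1 - fs₁.length) (c.fill n) ++
      ((p ++ u ++ q) :: fs₁) with hAbs
    set A : W18 := Abs.flatten ++ c.τ n with hA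
    have hAmem : A ∈ c.B (n + 1) := by
      refine (c.mem_rec hn1).2 ⟨Abs, ?_, ?_, rfl⟩
      · simp only [hAbs, List.length_append, List.length_replicate, List.length_cons]
        omega
      · intro b hb
        rcases List.mem_append.1 hb with hb | hb
        · rw [List.eq_of_mem_replicate hb]; exact c.fill_mem hn1
        · rcases List.mem_cons.1 hb with rfl | hb
          · exact hα
          · exact hf2 b hb
    set Bbs : List W18 := fs₂ ++ ((p' ++ w ++ q') ::
      List.replicate (c.t n - 1 - fs₂.length) (c.fill n)) with hBbs
    set Bw : W18 := Bbs.flatten ++ c.τ n with hB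
    have hBmem : Bw ∈ c.B (n + 1) := by
      refine (c.mem_rec hn1).2 ⟨Bbs, ?_, ?_, rfl⟩
      · simp only [hBbs, List.length_append, List.length_replicate, List.length_cons]
        omega
      · intro b hb
        rcases List.mem_append.1 hb with hb | hb
        · exact hg2 b hb
        · rcases List.mem_cons.1 hb with rfl | hb
          · exact hα'
          · rw [List.eq_of_mem_replicate hb]; exact c.fill_mem hn1
    set bs' : List W18 := A :: (fsC ++ [Bw]) with hbs'
    have hbs'len : bs'.length ≤ c.t (n + 1) := by
      simp only [hbs', List.length_cons, List.length_append, List.length_nil]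
      omega
    have hbs'mem : ∀ b ∈ bs', b ∈ c.B (n + 1) := by
      intro b hb
      rcases List.mem_cons.1 hb with rfl | hb
      · exact hAmem
      · rcases List.mem_append.1 hb with hb | hb
        · exact hC2 b hb
        · rw [List.mem_singleton.1 hb]; exact hBmem
    refine ⟨n + 2, _,
      q ++ fs₁.flatten ++ c.τ n ++ fsC.flatten ++ fs₂.flatten ++ p',
      by omega, c.mk_word hn1' hbs'len hbs'mem, ?_, ?_⟩
    · simp only [List.length_append, hfg]
      have hTd : (c.τ n).length = c.T n := rfl
      omega
    · refine ⟨(List.replicate (c.t n - 1 - fs₁.length) (c.fill n)).flatten ++ p,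
        q' ++ (List.replicate (c.t n - 1 - fs₂.length) (c.fill n)).flatten ++ c.τ n ++
          (List.replicate (c.t (n + 1) - bs'.length) (c.fill (n + 1))).flatten ++
          c.τ (n + 1), ?_⟩
      simp only [hbs', hA, hB, hAbs, hBbs, List.flatten_append, List.flatten_cons,
        List.flatten_nil, List.append_assoc, List.append_nil]

/-- The covering induction. -/
lemma cover (u w : W18) : ∀ (fuel : ℕ) (n : ℕ), 2 ≤ n →
    ∀ (p q p' q' : W18), (p ++ u ++ q) ∈ c.B n → (p' ++ w ++ q') ∈ c.B n →
    ∀ m : ℕ, q.length + p'.length + 2 * c.s n ≤ m →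
      m ≤ q.length + p'.length + 2 * c.s n + fuel →
      ∃ (k : ℕ) (γ v : W18), 1 ≤ k ∧ γ ∈ c.B k ∧ v.length = m ∧ (u ++ v ++ w) <:+: γ := by
  intro fuel
  induction fuel with
  | zero =>
      intro n hn p q p' q' hα hα' m hm1 hm2
      have hn1 : 1 ≤ n := by omega
      have ht : 1 ≤ c.t n := le_trans (by norm_num) (c.t_ge6 hn1)
      have P4 : c.s n ≤ c.t n * c.s n := Nat.le_mul_of_pos_left _ (by omega)
      exact c.direct u w n hn p q p' q' hα hα' m hm1 (by omega)
  | succ fuel ih =>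
      intro n hn p q p' q' hα hα' m hm1 hm2
      have hn1 : 1 ≤ n := by omega
      have ht : 1 ≤ c.t n := le_trans (by norm_num) (c.t_ge6 hn1)
      have P4 : c.s n ≤ c.t n * c.s n := Nat.le_mul_of_pos_left _ (by omega)
      have hT1 := c.T_pos hn1
      by_cases hcase : m ≤ q.length + p'.length + 3 * c.T n + 2 * (c.t n * c.s n)
      · exact c.direct u w n hn p q p' q' hα hα' m hm1 hcase
      · push_neg at hcase
        set reps := List.replicate (c.t n - 1) (c.fill n) with hreps
        have hreplen : reps.length = c.t n - 1 := by
          rw [hreps]; exact List.length_replicate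
        have hrepmem : ∀ b ∈ reps, b ∈ c.B n := by
          intro b hb
          rw [List.eq_of_mem_replicate hb]
          exact c.fill_mem hn1
        have hA1 : (reps.flatten ++ p) ++ u ++ (q ++ c.τ n) ∈ c.B (n + 1) := by
          have hmm : (reps ++ [p ++ u ++ q]).flatten ++ c.τ n ∈ c.B (n + 1) := by
            refine (c.mem_rec hn1).2 ⟨_, ?_, ?_, rfl⟩
            · simp only [List.length_append, List.length_replicate, List.length_cons,
                List.length_nil]
              omega
            · intro b hb
              rcases List.mem_append.1 hb with hb | hb
              · exact hrepmem b hb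
              · rw [List.mem_singleton.1 hb]; exact hα
          have he : (reps ++ [p ++ u ++ q]).flatten ++ c.τ n =
              (reps.flatten ++ p) ++ u ++ (q ++ c.τ n) := by
            simp only [List.flatten_append, List.flatten_cons, List.flatten_nil,
              List.append_assoc, List.append_nil]
          rw [← he]
          exact hmm
        have hA2 : p' ++ w ++ (q' ++ (reps.flatten ++ c.τ n)) ∈ c.B (n + 1) := by
          have hmm : ((p' ++ w ++ q') :: reps).flatten ++ c.τ n ∈ c.B (n + 1) := by
            refine (c.mem_rec hn1).2 ⟨_, ?_, ?_, rfl⟩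
            · simp only [List.length_cons, List.length_replicate]
              omega
            · intro b hb
              rcases List.mem_cons.1 hb with rfl | hb
              · exact hα'
              · exact hrepmem b hb
          have he : ((p' ++ w ++ q') :: reps).flatten ++ c.τ n =
              p' ++ w ++ (q' ++ (reps.flatten ++ c.τ n)) := by
            simp only [List.flatten_cons, List.append_assoc]
          rw [← he]
          exact hmm
        have hsrec := c.s_rec hn1
        have hTlen : (c.τ n).length = c.T n := rfl
        apply ih (n + 1) (by omega) (reps.flatten ++ p) (q ++ c.τ n) p'
          (q' ++ (reps.flatten ++ c.τ n)) hA1 hA2 m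
        · simp only [List.length_append, hTlen, hsrec]
          omega
        · simp only [List.length_append, hTlen, hsrec]
          omega

/-- Embedding a word of the language into a single word of level `n+1`. -/
lemma embed {n : ℕ} (hn : 1 ≤ n) {u : W18}
    (hu : u ∈ lang (⋂ m : ℕ, codedShift (c.B (m + 1)))) (hlen : u.length ≤ c.s n) :
    ∃ p q : W18, p ++ u ++ q ∈ c.B (n + 1) := by
  rcases Nat.eq_zero_or_pos u.length with h0 | h0
  · rw [List.length_eq_zero_iff] at h0
    subst h0
    refine ⟨[], c.fill (n + 1), ?_⟩
    simpa using c.fill_mem (by omega : 1 ≤ n + 1)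
  · obtain ⟨bs, hbs, hinf⟩ := c.lang_infix_concat hn hu
    obtain ⟨b₁, b₂, hb₁, hb₂, huin⟩ := c.infix_two_blocks hn bs hbs u h0 hlen hinf
    obtain ⟨pp, qq, hppqq⟩ := huin
    set bs2 : List W18 := [b₁, b₂] with hbs2
    have hbs2len : bs2.length ≤ c.t n := by
      have := c.t_ge6 hn
      simp only [hbs2, List.length_cons, List.length_nil]
      omega
    have hbs2mem : ∀ b ∈ bs2, b ∈ c.B n := by
      intro b hb
      rcases List.mem_cons.1 hb with rfl | hb
      · exact hb₁
      · have hbe : b = b₂ := by simpa using hb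
        rw [hbe]; exact hb₂
    have hγ := c.mk_word hn hbs2len hbs2mem
    refine ⟨pp, qq ++ (List.replicate (c.t n - bs2.length) (c.fill n)).flatten ++ c.τ n, ?_⟩
    have h1 : bs2.flatten = pp ++ u ++ qq := by
      rw [hbs2]
      simp only [List.flatten_cons, List.flatten_nil, List.append_nil]
      exact hppqq.symm
    have he : (bs2 ++ List.replicate (c.t n - bs2.length) (c.fill n)).flatten ++ c.τ n =
        pp ++ u ++ (qq ++ (List.replicate (c.t n - bs2.length) (c.fill n)).flatten ++
          c.τ n) := by
      rw [List.flatten_append, h1]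
      simp only [List.append_assoc]
    rw [← he]
    exact hγ

end Ctx18

end Statement18Aux

/-- under the stated conditions on `t(n)`, the intersection
`X = ⋂_{n≥1} X_n` of the coded shifts is topologically mixing. -/
theorem statement18 (B : ℕ → Finset (List Bool)) (t : ℕ → ℕ) (τ : ℕ → List Bool)
    (hB1 : B 1 = {[false], [true, true]})
    (ht2 : ∀ n : ℕ, 1 ≤ n → 2 ≤ t n)
    (hτ : ∀ n : ℕ, 1 ≤ n → ∃ l : List (List Bool), l.Perm (B n).toList ∧ τ n = l.flatten)
    (hrec : ∀ n : ℕ, 1 ≤ n → (B (n + 1) : Set (List Bool)) =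
      {w | ∃ bs : List (List Bool), bs.length = t n ∧ (∀ b ∈ bs, b ∈ B n) ∧
        w = bs.flatten ++ τ n})
    (hratio : ∀ n : ℕ, 1 ≤ n → ((minLen (B n) : ℝ) / (maxLen (B n) : ℝ) < 2 / 3))
    (ht5 : ∀ n : ℕ, 1 ≤ n →
      ((maxLen (B n) : ℝ) / ((maxLen (B n) : ℝ) - (minLen (B n) : ℝ)) ≤ (t n : ℝ)))
    (ht6 : ∀ n : ℕ, 1 ≤ n →
      ((2 * (minLen (B n) : ℝ) + 2 * (maxLen (B n) : ℝ) + 3 * ((τ n).length : ℝ)) /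
        (maxLen (B n) : ℝ) ≤ (t n : ℝ))) :
    MixingShift (⋂ n : ℕ, codedShift (B (n + 1))) := by
  intro u hu w hw
  set c : Ctx18 := ⟨B, t, τ, hB1, hτ, hrec, hratio, ht6⟩ with hc
  set n1 := max 1 (max u.length w.length) with hn1def
  have hn1 : 1 ≤ n1 := le_max_left _ _
  have hns := c.n_le_s n1 hn1
  have hsu : u.length ≤ c.s n1 :=
    le_trans (le_trans (le_max_left _ _) (le_max_right _ _)) hns
  have hsw : w.length ≤ c.s n1 :=
    le_trans (le_trans (le_max_right _ _) (le_max_right _ _)) hns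
  have hu' : u ∈ lang (⋂ m : ℕ, codedShift (c.B (m + 1))) := hu
  have hw' : w ∈ lang (⋂ m : ℕ, codedShift (c.B (m + 1))) := hw
  obtain ⟨p, q, hU⟩ := c.embed hn1 hu' hsu
  obtain ⟨p', q', hW⟩ := c.embed hn1 hw' hsw
  refine ⟨q.length + p'.length + 2 * c.s (n1 + 1), ?_⟩
  intro m hm
  obtain ⟨k, γ, v, hk, hγ, hv, hinf⟩ := c.cover u w m (n1 + 1) (by omega) p q p' q'
    hU hW m hm (by omega)
  exact ⟨v, hv, c.infix_mem_lang hk hγ hinf⟩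

end DbarPaper
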